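/- Let g : [0,1] → ℝ be three times differentiable and convex with g''(0) > 0, and suppose |g'''(t)| ≤ S·g''(t) for all t ∈ [0,1] with S ≥ 0. Then for all t ∈ [0,1]: ((e^{−St} + St − 1)/S²)·g''(0) ≤ g(t) − g(0) − g'(0)·t ≤ ((e^{St} − St − 1)/S²)·g''(0). -/

import Mathlib

open Set Real

/-- Second-order comparison: `D 0 = 0`, `D' 0 = 0`, `D'' ≥ 0` on `Icc 0 1` implies `D ≥ 0`. -/
lemma aux_nonneg_stmt2 (D D' D'' : ℝ → ℝ)
    (hD : ∀ t ∈ Icc (0:ℝ) 1, HasDerivWithinAt D (D' t) (Icc 0 1) t)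
    (hD' : ∀ t ∈ Icc (0:ℝ) 1, HasDerivWithinAt D' (D'' t) (Icc 0 1) t)
    (h0 : D 0 = 0) (h0' : D' 0 = 0)
    (hpos : ∀ t ∈ Icc (0:ℝ) 1, 0 ≤ D'' t) :
    ∀ t ∈ Icc (0:ℝ) 1, 0 ≤ D t := by
  have hint : interior (Icc (0:ℝ) 1) ⊆ Icc 0 1 := interior_subset
  have h0mem : (0:ℝ) ∈ Icc (0:ℝ) 1 := left_mem_Icc.mpr one_pos.le
  have hmono' : MonotoneOn D' (Icc 0 1) :=
    monotoneOn_of_hasDerivWithinAt_nonneg (convex_Icc 0 1)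
      (fun t ht => (hD' t ht).continuousWithinAt)
      (fun t ht => (hD' t (hint ht)).mono hint)
      (fun t ht => hpos t (hint ht))
  have hD'nonneg : ∀ t ∈ Icc (0:ℝ) 1, 0 ≤ D' t := by
    intro t ht
    have := hmono' h0mem ht ht.1
    rwa [h0'] at this
  have hmono : MonotoneOn D (Icc 0 1) :=
    monotoneOn_of_hasDerivWithinAt_nonneg (convex_Icc 0 1)
      (fun t ht => (hD t ht).continuousWithinAt)
      (fun t ht => (hD t (hint ht)).mono hint)
      (fun t ht => hD'nonneg t (hint ht))
  intro t ht
  have := hmono h0mem ht ht.1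
  rwa [h0] at this

noncomputable def phiS (S t : ℝ) : ℝ :=
  if S = 0 then t ^ 2 / 2 else (Real.exp (S * t) - S * t - 1) / S ^ 2

noncomputable def phiS' (S t : ℝ) : ℝ :=
  if S = 0 then t else (Real.exp (S * t) - 1) / S

lemma phiS_zero (S : ℝ) : phiS S 0 = 0 := by
  by_cases h : S = 0 <;> simp [phiS, h]

lemma phiS'_zero (S : ℝ) : phiS' S 0 = 0 := by
  by_cases h : S = 0 <;> simp [phiS', h]

lemma expS_hasDerivAt (S t : ℝ) :
    HasDerivAt (fun u => Real.exp (S * u)) (S * Real.exp (S * t)) t := by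
  have h : HasDerivAt (fun u : ℝ => S * u) (S * 1) t := (hasDerivAt_id t).const_mul S
  have := h.exp
  convert this using 1; ring

lemma phiS_eq_zero : phiS 0 = fun t : ℝ => t ^ 2 / 2 := by
  funext t; simp [phiS]

lemma phiS_eq (S : ℝ) (h : S ≠ 0) :
    phiS S = fun t : ℝ => (Real.exp (S * t) - S * t - 1) / S ^ 2 := by
  funext t; simp [phiS, h]

lemma phiS'_eq_zero : phiS' 0 = fun t : ℝ => t := by
  funext t; simp [phiS']

lemma phiS'_eq (S : ℝ) (h : S ≠ 0) :
    phiS' S = fun t : ℝ => (Real.exp (S * t) - 1) / S := by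
  funext t; simp [phiS', h]

lemma phiS_hasDerivAt (S t : ℝ) : HasDerivAt (phiS S) (phiS' S t) t := by
  by_cases h : S = 0
  · have : HasDerivAt (fun u : ℝ => u ^ 2 / 2) t t := by
      have := (hasDerivAt_pow 2 t).div_const 2
      exact this.congr_deriv (by norm_num)
    subst h
    rw [phiS_eq_zero]
    simpa [phiS'] using this
  · have h1 : HasDerivAt (fun u : ℝ => (Real.exp (S * u) - S * u - 1) / S ^ 2)
        ((S * Real.exp (S * t) - S * 1 - 0) / S ^ 2) t := by
      exact (((expS_hasDerivAt S t).sub ((hasDerivAt_id t).const_mul S)).sub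
        (hasDerivAt_const t 1)).div_const _
    have heq : (S * Real.exp (S * t) - S * 1 - 0) / S ^ 2 = (Real.exp (S * t) - 1) / S := by
      field_simp; ring
    rw [heq] at h1
    rw [phiS_eq S h]
    simpa [phiS', h] using h1

lemma phiS'_hasDerivAt (S t : ℝ) : HasDerivAt (phiS' S) (Real.exp (S * t)) t := by
  by_cases h : S = 0
  · subst h
    rw [phiS'_eq_zero]
    simpa using (hasDerivAt_id' t)
  · have h1 : HasDerivAt (fun u : ℝ => (Real.exp (S * u) - 1) / S)
        ((S * Real.exp (S * t) - 0) / S) t :=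
      ((expS_hasDerivAt S t).sub (hasDerivAt_const t 1)).div_const _
    have heq : (S * Real.exp (S * t) - 0) / S = Real.exp (S * t) := by rw [sub_zero, mul_div_cancel_left₀ _ h]
    rw [heq] at h1
    rw [phiS'_eq S h]
    exact h1

/-- Lemma (bach-1d): Taylor bracketing for pseudo self-concordant functions on [0,1].
For S = 0 the bracketing coefficients are interpreted as their limits t²/2. -/
theorem stmt_2 (g : ℝ → ℝ) (S : ℝ) (hS : 0 ≤ S)
    (hg : ContDiffOn ℝ 3 g (Set.Icc 0 1))
    (hconv : ConvexOn ℝ (Set.Icc 0 1) g)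
    (h0 : 0 < iteratedDerivWithin 2 g (Set.Icc 0 1) 0)
    (hsc : ∀ t ∈ Set.Icc (0:ℝ) 1,
      |iteratedDerivWithin 3 g (Set.Icc 0 1) t| ≤
        S * iteratedDerivWithin 2 g (Set.Icc 0 1) t) :
    ∀ t ∈ Set.Icc (0:ℝ) 1,
      (if S = 0 then t ^ 2 / 2 else (Real.exp (-(S * t)) + S * t - 1) / S ^ 2) *
          iteratedDerivWithin 2 g (Set.Icc 0 1) 0
        ≤ g t - g 0 - iteratedDerivWithin 1 g (Set.Icc 0 1) 0 * t ∧
      g t - g 0 - iteratedDerivWithin 1 g (Set.Icc 0 1) 0 * t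
        ≤ (if S = 0 then t ^ 2 / 2 else (Real.exp (S * t) - S * t - 1) / S ^ 2) *
          iteratedDerivWithin 2 g (Set.Icc 0 1) 0 := by
  set s : Set ℝ := Set.Icc 0 1 with hsdef
  have hs : UniqueDiffOn ℝ s := uniqueDiffOn_Icc one_pos
  set f1 := iteratedDerivWithin 1 g s with hf1
  set f2 := iteratedDerivWithin 2 g s with hf2
  set f3 := iteratedDerivWithin 3 g s with hf3
  have h0mem : (0:ℝ) ∈ s := left_mem_Icc.mpr one_pos.le
  have hder : ∀ n : ℕ, n < 3 → ∀ t ∈ s, HasDerivWithinAt (iteratedDerivWithin n g s)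
      (iteratedDerivWithin (n+1) g s t) s t := by
    intro n hn t ht
    have hdiff := (hg.differentiableOn_iteratedDerivWithin
      (by exact_mod_cast hn) hs) t ht
    rw [iteratedDerivWithin_succ]
    exact hdiff.hasDerivWithinAt
  have h1 : ∀ t ∈ s, HasDerivWithinAt g (f1 t) s t := by
    have := hder 0 (by norm_num)
    simpa only [iteratedDerivWithin_zero] using this
  have h2 : ∀ t ∈ s, HasDerivWithinAt f1 (f2 t) s t := hder 1 (by norm_num)
  have h3 : ∀ t ∈ s, HasDerivWithinAt f2 (f3 t) s t := hder 2 (by norm_num)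
  have hexp : ∀ c : ℝ, ∀ t : ℝ,
      HasDerivAt (fun u => Real.exp (c * u)) (c * Real.exp (c * t)) t := by
    intro c t
    have h : HasDerivAt (fun u : ℝ => c * u) (c * 1) t := (hasDerivAt_id t).const_mul c
    have := h.exp
    convert this using 1; ring
  -- upper exponential bound on f2
  have key_up : ∀ t ∈ s, f2 t ≤ Real.exp (S * t) * f2 0 := by
    intro t ht
    have hA : ∀ u ∈ s, HasDerivWithinAt (fun v => f2 v * Real.exp (-S * v))
        (f3 u * Real.exp (-S * u) + f2 u * (-S * Real.exp (-S * u))) s u := by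
      intro u hu
      exact (h3 u hu).mul ((hexp (-S) u).hasDerivWithinAt)
    have hanti : AntitoneOn (fun v => f2 v * Real.exp (-S * v)) s := by
      apply antitoneOn_of_hasDerivWithinAt_nonpos (convex_Icc 0 1)
        (fun u hu => (hA u hu).continuousWithinAt)
        (fun u hu => (hA u (interior_subset hu)).mono interior_subset)
      intro u hu
      have hu' : u ∈ s := interior_subset hu
      have habs := hsc u hu'
      have h3le : f3 u ≤ S * f2 u := (abs_le.mp habs).2
      have hepos : 0 < Real.exp (-S * u) := Real.exp_pos _
      nlinarith [hepos.le]
    have := hanti h0mem ht ht.1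
    simp only [mul_zero, Real.exp_zero, mul_one] at this
    have hepos : 0 < Real.exp (-S * t) := Real.exp_pos _
    rw [show (S : ℝ) * t = -(-S * t) by ring, Real.exp_neg, inv_mul_eq_div]
    exact (le_div_iff₀ hepos).mpr this
  -- lower exponential bound on f2
  have key_lo : ∀ t ∈ s, Real.exp (-S * t) * f2 0 ≤ f2 t := by
    intro t ht
    have hB : ∀ u ∈ s, HasDerivWithinAt (fun v => f2 v * Real.exp (S * v))
        (f3 u * Real.exp (S * u) + f2 u * (S * Real.exp (S * u))) s u := by
      intro u hu
      exact (h3 u hu).mul ((hexp S u).hasDerivWithinAt)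
    have hmono : MonotoneOn (fun v => f2 v * Real.exp (S * v)) s := by
      apply monotoneOn_of_hasDerivWithinAt_nonneg (convex_Icc 0 1)
        (fun u hu => (hB u hu).continuousWithinAt)
        (fun u hu => (hB u (interior_subset hu)).mono interior_subset)
      intro u hu
      have hu' : u ∈ s := interior_subset hu
      have habs := hsc u hu'
      have h3ge : -(S * f2 u) ≤ f3 u := (abs_le.mp habs).1
      have hepos : 0 < Real.exp (S * u) := Real.exp_pos _
      nlinarith [hepos.le]
    have := hmono h0mem ht ht.1
    simp only [mul_zero, Real.exp_zero, mul_one] at this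
    have hepos : 0 < Real.exp (S * t) := Real.exp_pos _
    rw [show (-S : ℝ) * t = -(S * t) by ring, Real.exp_neg, inv_mul_eq_div]
    exact (div_le_iff₀ hepos).mpr (by linarith [this])
  intro t ht
  constructor
  · -- lower bound
    have hE := aux_nonneg_stmt2
      (fun u => (g u - g 0 - f1 0 * u) - phiS (-S) u * f2 0)
      (fun u => (f1 u - f1 0) - phiS' (-S) u * f2 0)
      (fun u => f2 u - Real.exp (-S * u) * f2 0)
      (fun u hu => by
        have hg' : HasDerivWithinAt (fun v => g v - g 0 - f1 0 * v) (f1 u - f1 0 * 1) s u :=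
          ((h1 u hu).sub_const (g 0)).sub (((hasDerivAt_id u).const_mul (f1 0)).hasDerivWithinAt)
        have hp := ((phiS_hasDerivAt (-S) u).hasDerivWithinAt (s := Set.Icc 0 1).mul_const (f2 0))
        have := hg'.sub hp; simp only [mul_one] at this; exact this)
      (fun u hu => by
        have hp := ((phiS'_hasDerivAt (-S) u).hasDerivWithinAt (s := Set.Icc 0 1).mul_const (f2 0))
        exact ((h2 u hu).sub_const (f1 0)).sub hp)
      (by simp [phiS_zero])
      (by simp [phiS'_zero])
      (fun u hu => by have := key_lo u hu; linarith)
      t ht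
    have hcoef : (if S = 0 then t ^ 2 / 2 else (Real.exp (-(S * t)) + S * t - 1) / S ^ 2)
        = phiS (-S) t := by
      by_cases hS0 : S = 0
      · simp [phiS, hS0]
      · have hS0' : (-S : ℝ) ≠ 0 := neg_ne_zero.mpr hS0
        simp only [phiS, hS0, if_false, hS0', if_neg hS0']
        rw [neg_mul, neg_sq]
        ring_nf
    rw [hcoef]
    linarith [hE]
  · -- upper bound
    have hD := aux_nonneg_stmt2
      (fun u => phiS S u * f2 0 - (g u - g 0 - f1 0 * u))
      (fun u => phiS' S u * f2 0 - (f1 u - f1 0))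
      (fun u => Real.exp (S * u) * f2 0 - f2 u)
      (fun u hu => by
        have hg' : HasDerivWithinAt (fun v => g v - g 0 - f1 0 * v) (f1 u - f1 0 * 1) s u :=
          ((h1 u hu).sub_const (g 0)).sub (((hasDerivAt_id u).const_mul (f1 0)).hasDerivWithinAt)
        have hp := ((phiS_hasDerivAt S u).hasDerivWithinAt (s := Set.Icc 0 1).mul_const (f2 0))
        have := hp.sub hg'; simp only [mul_one] at this; exact this)
      (fun u hu => by
        have hp := ((phiS'_hasDerivAt S u).hasDerivWithinAt (s := Set.Icc 0 1).mul_const (f2 0))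
        exact hp.sub ((h2 u hu).sub_const (f1 0)))
      (by simp [phiS_zero])
      (by simp [phiS'_zero])
      (fun u hu => by have := key_up u hu; linarith)
      t ht
    have hcoef : (if S = 0 then t ^ 2 / 2 else (Real.exp (S * t) - S * t - 1) / S ^ 2)
        = phiS S t := rfl
    rw [hcoef]
    linarith [hD]
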